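/- Let N ≥ 1 be an integer, s ∈ (0,1) with N > 2s, and β > 0. Suppose U : ℝ^N → ℝ is measurable with 0 ≤ U(y) ≤ β/(1+|y|^{N+2s}) for all y. Then there exists C > 0 (depending only on N, s, β) such that for every x ∈ ℝ^N with |x| ≥ 2, ∫_{B_{|x|/2}(x)} U(y)² / |x−y|^{N−2s} dy ≤ C/(1+|x|^{2N+2s}). -/

import Mathlib

open MeasureTheory Metric

lemma kernel_lintegral_bound (N : ℕ) (hN : 1 ≤ N) (a : ℝ) (ha0 : 0 < a) (haN : a < N) :
    ∃ c : ℝ, 0 < c ∧ ∀ (x : EuclideanSpace ℝ (Fin N)) (R : ℝ), 0 < R →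
      (∫⁻ y in ball x R, ENNReal.ofReal (‖x - y‖ ^ (-a))) ≤
        ENNReal.ofReal (c * R ^ ((N : ℝ) - a)) := by
  haveI : Nonempty (Fin N) := ⟨⟨0, hN⟩⟩
  haveI : Nontrivial (EuclideanSpace ℝ (Fin N)) :=
    ⟨0, EuclideanSpace.single ⟨0, hN⟩ (1 : ℝ), by
      intro h
      have := congrArg (fun f => f ⟨0, hN⟩) h
      simp [EuclideanSpace.single] at this⟩
  set κ : ENNReal := volume (ball (0 : EuclideanSpace ℝ (Fin N)) 1) with hκ
  have hκ_lt : κ < ⊤ := measure_ball_lt_top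
  set q : ℝ := (2 : ℝ) ^ (a - (N : ℝ)) with hqdef
  have hq0 : 0 < q := Real.rpow_pos_of_pos two_pos _
  have hq1 : q < 1 := Real.rpow_lt_one_of_one_lt_of_neg one_lt_two (by linarith)
  have h1q : (0:ℝ) < 1 - q := by linarith
  have hcpos : (0:ℝ) < (2 : ℝ) ^ a * κ.toReal * (1 - q)⁻¹ + 1 := by
    have h1 : (0:ℝ) ≤ (2 : ℝ) ^ a * κ.toReal * (1 - q)⁻¹ := by positivity
    linarith
  refine ⟨(2 : ℝ) ^ a * κ.toReal * (1 - q)⁻¹ + 1, hcpos, fun x R hR => ?_⟩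
  set f : EuclideanSpace ℝ (Fin N) → ENNReal := fun y => ENNReal.ofReal (‖x - y‖ ^ (-a)) with hf
  set A : ℕ → Set (EuclideanSpace ℝ (Fin N)) :=
    fun k => ball x (R / 2 ^ k) \ ball x (R / 2 ^ (k + 1)) with hA
  have hcover : ball x R ⊆ {x} ∪ ⋃ k, A k := by
    intro y hy
    rcases eq_or_ne y x with h | h
    · exact Or.inl (by simp [h])
    · refine Or.inr ?_
      have hd0 : 0 < dist y x := dist_pos.2 h
      have hdR : dist y x < R := by simpa [mem_ball] using hy
      have hex : ∃ k : ℕ, R / 2 ^ (k + 1) ≤ dist y x := by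
        obtain ⟨k, hk⟩ := pow_unbounded_of_one_lt (R / dist y x) one_lt_two
        refine ⟨k, ?_⟩
        rw [div_le_iff₀ (by positivity)]
        have hk' : R < 2 ^ k * dist y x := (div_lt_iff₀ hd0).1 hk
        have h2k : (2:ℝ) ^ k ≤ 2 ^ (k + 1) := by
          apply pow_le_pow_right₀ one_le_two (Nat.le_succ k)
        nlinarith
      set k₀ := Nat.find hex with hk₀
      have h1 : R / 2 ^ (k₀ + 1) ≤ dist y x := Nat.find_spec hex
      have h2 : dist y x < R / 2 ^ k₀ := by
        rcases Nat.eq_zero_or_pos k₀ with h0 | h0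
        · simpa [h0] using hdR
        · have := Nat.find_min hex (Nat.sub_lt h0 one_pos)
          have heq : k₀ - 1 + 1 = k₀ := Nat.succ_pred_eq_of_pos h0
          rw [heq] at this
          linarith [not_le.1 this]
      exact Set.mem_iUnion.2 ⟨k₀, by simp [hA, mem_ball, h2, not_lt.2 h1]⟩
  have hAmeas : ∀ k, MeasurableSet (A k) := fun k =>
    measurableSet_ball.diff measurableSet_ball
  have key : ∀ k : ℕ, (R / 2 ^ (k + 1)) ^ (-a) * (R / 2 ^ k) ^ (N : ℕ) =
      2 ^ a * R ^ ((N : ℝ) - a) * q ^ k := by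
    intro k
    have h2 : (0:ℝ) < 2 := two_pos
    rw [hqdef]
    rw [← Real.rpow_natCast (R / 2 ^ k) N, ← Real.rpow_natCast ((2:ℝ) ^ (a - (N:ℝ))) k,
      ← Real.rpow_natCast (2:ℝ) (k+1), ← Real.rpow_natCast (2:ℝ) k]
    rw [← Real.rpow_mul h2.le]
    rw [Real.div_rpow hR.le (Real.rpow_nonneg h2.le _),
        Real.div_rpow hR.le (Real.rpow_nonneg h2.le _)]
    rw [← Real.rpow_mul h2.le, ← Real.rpow_mul h2.le]
    simp only [Real.rpow_def_of_pos hR, Real.rpow_def_of_pos h2, div_eq_mul_inv,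
      ← Real.exp_neg, ← Real.exp_add]
    congr 1
    push_cast
    ring
  have hterm : ∀ k : ℕ, (∫⁻ y in A k, f y) ≤
      ENNReal.ofReal (2 ^ a * R ^ ((N : ℝ) - a)) * ENNReal.ofReal q ^ k * κ := by
    intro k
    have hrk : (0:ℝ) < R / 2 ^ (k + 1) := by positivity
    have hstep : (∫⁻ y in A k, f y) ≤
        ENNReal.ofReal ((R / 2 ^ (k + 1)) ^ (-a)) * volume (A k) := by
      rw [← setLIntegral_const]
      apply setLIntegral_mono' (hAmeas k)
      intro y hy
      apply ENNReal.ofReal_le_ofReal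
      have hyx : R / 2 ^ (k + 1) ≤ ‖x - y‖ := by
        have h2' : y ∉ ball x (R / 2 ^ (k + 1)) := hy.2
        rw [mem_ball, not_lt, dist_eq_norm] at h2'
        rwa [show x - y = -(y - x) by abel, norm_neg]
      exact Real.rpow_le_rpow_of_nonpos hrk hyx (neg_nonpos.2 ha0.le)
    have hvol : volume (A k) ≤ ENNReal.ofReal ((R / 2 ^ k) ^ (N : ℕ)) * κ := by
      calc volume (A k) ≤ volume (ball x (R / 2 ^ k)) := measure_mono Set.diff_subset
      _ = ENNReal.ofReal ((R / 2 ^ k) ^ (N : ℕ)) * κ := by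
          rw [Measure.addHaar_ball volume x (by positivity : (0:ℝ) ≤ R / 2 ^ k)]
          rw [finrank_euclideanSpace_fin]
    calc (∫⁻ y in A k, f y) ≤ ENNReal.ofReal ((R / 2 ^ (k + 1)) ^ (-a)) * volume (A k) := hstep
    _ ≤ ENNReal.ofReal ((R / 2 ^ (k + 1)) ^ (-a)) *
          (ENNReal.ofReal ((R / 2 ^ k) ^ (N : ℕ)) * κ) := by gcongr
    _ = ENNReal.ofReal ((R / 2 ^ (k + 1)) ^ (-a) * (R / 2 ^ k) ^ (N : ℕ)) * κ := by
        rw [ENNReal.ofReal_mul (Real.rpow_nonneg hrk.le _), mul_assoc]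
    _ = ENNReal.ofReal (2 ^ a * R ^ ((N : ℝ) - a) * q ^ k) * κ := by rw [key k]
    _ = ENNReal.ofReal (2 ^ a * R ^ ((N : ℝ) - a)) * ENNReal.ofReal q ^ k * κ := by
        rw [ENNReal.ofReal_mul (by positivity), ENNReal.ofReal_pow hq0.le]
  have hsum : (∫⁻ y in ball x R, f y) ≤
      ENNReal.ofReal (2 ^ a * R ^ ((N : ℝ) - a)) * (1 - ENNReal.ofReal q)⁻¹ * κ := by
    calc (∫⁻ y in ball x R, f y) ≤ ∫⁻ y in ({x} ∪ ⋃ k, A k), f y := lintegral_mono_set hcover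
    _ ≤ (∫⁻ y in ({x} : Set _), f y) + ∫⁻ y in ⋃ k, A k, f y := lintegral_union_le _ _ _
    _ = ∫⁻ y in ⋃ k, A k, f y := by
        rw [lintegral_singleton]
        have : f x = 0 := by
          simp [hf, Real.zero_rpow (neg_ne_zero.2 ha0.ne')]
        rw [this, zero_mul, zero_add]
    _ ≤ ∑' k, ∫⁻ y in A k, f y := lintegral_iUnion_le _ _
    _ ≤ ∑' k, ENNReal.ofReal (2 ^ a * R ^ ((N : ℝ) - a)) * ENNReal.ofReal q ^ k * κ :=
        ENNReal.tsum_le_tsum hterm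
    _ = ENNReal.ofReal (2 ^ a * R ^ ((N : ℝ) - a)) * (∑' k, ENNReal.ofReal q ^ k) * κ := by
        rw [ENNReal.tsum_mul_right, ENNReal.tsum_mul_left]
    _ = _ := by rw [ENNReal.tsum_geometric]
  refine hsum.trans ?_
  have e1 : (1 - ENNReal.ofReal q)⁻¹ = ENNReal.ofReal ((1 - q)⁻¹) := by
    rw [← ENNReal.ofReal_one, ← ENNReal.ofReal_sub _ hq0.le,
      ENNReal.ofReal_inv_of_pos h1q]
  have e2 : κ = ENNReal.ofReal κ.toReal := (ENNReal.ofReal_toReal hκ_lt.ne).symm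
  rw [e1, ← ENNReal.ofReal_mul (by positivity)]
  conv_lhs => rw [e2]
  rw [← ENNReal.ofReal_mul (by positivity)]
  apply ENNReal.ofReal_le_ofReal
  have hRp : (0:ℝ) ≤ R ^ ((N:ℝ) - a) := Real.rpow_nonneg hR.le _
  linarith [hRp]

/-- Estimate of the contribution near the singularity of the kernel
`|x−y|^{−(N−2s)}` to the Riesz potential of `U²`. -/
theorem riesz_potential_near_singularity_bound
    (N : ℕ) (hN : 1 ≤ N) (s : ℝ) (hs0 : 0 < s) (hs1 : s < 1)
    (hNs : 2 * s < (N : ℝ)) (β : ℝ) (hβ : 0 < β)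
    (U : EuclideanSpace ℝ (Fin N) → ℝ) (hU : Measurable U)
    (hU0 : ∀ y, 0 ≤ U y)
    (hUu : ∀ y, U y ≤ β / (1 + ‖y‖ ^ ((N : ℝ) + 2 * s))) :
    ∃ C : ℝ, 0 < C ∧
      ∀ x : EuclideanSpace ℝ (Fin N), 2 ≤ ‖x‖ →
        (∫ y in ball x (‖x‖ / 2), (U y) ^ 2 / ‖x - y‖ ^ ((N : ℝ) - 2 * s)) ≤
          C / (1 + ‖x‖ ^ (2 * (N : ℝ) + 2 * s)) := by
  set a : ℝ := (N : ℝ) - 2 * s with hadef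
  have ha0 : 0 < a := by simp [hadef]; linarith
  have haN : a < (N : ℝ) := by simp [hadef]; linarith
  obtain ⟨c, hc, hker⟩ := kernel_lintegral_bound N hN a ha0 haN
  set p : ℝ := 2 * (N : ℝ) + 2 * s with hpdef
  have hp0 : 0 < p := by positivity
  refine ⟨2 * β ^ 2 * c * 2 ^ p, by positivity, fun x hx => ?_⟩
  have hx0 : (0 : ℝ) < ‖x‖ := by linarith
  set R : ℝ := ‖x‖ / 2 with hRdef
  have hR : 0 < R := by positivity
  have hR1 : 1 ≤ R := by rw [hRdef]; linarith
  set e : ℝ := (N : ℝ) + 2 * s with hedef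
  have he0 : 0 < e := by positivity
  set m : ℝ := β / R ^ e with hmdef
  have hm0 : 0 < m := by positivity
  -- pointwise bound on U in the ball
  have hUm : ∀ y ∈ ball x R, U y ≤ m := by
    intro y hy
    have hyR : R ≤ ‖y‖ := by
      have h1 : ‖x - y‖ < R := by
        rw [mem_ball, dist_eq_norm] at hy
        rwa [show x - y = -(y - x) by abel, norm_neg]
      have h2 : ‖x‖ - ‖y‖ ≤ ‖x - y‖ := norm_sub_norm_le x y
      have : ‖x‖ = 2 * R := by rw [hRdef]; ring
      linarith
    have hden : R ^ e ≤ 1 + ‖y‖ ^ e := by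
      have := Real.rpow_le_rpow hR.le hyR he0.le
      linarith
    calc U y ≤ β / (1 + ‖y‖ ^ e) := hUu y
    _ ≤ β / R ^ e := div_le_div_of_nonneg_left hβ.le (by positivity) hden
  -- rewrite the integrand
  have hintg : ∀ y : EuclideanSpace ℝ (Fin N),
      U y ^ 2 / ‖x - y‖ ^ a = U y ^ 2 * ‖x - y‖ ^ (-a) := by
    intro y
    rw [Real.rpow_neg (norm_nonneg _), div_eq_mul_inv]
  have hmeas : Measurable fun y : EuclideanSpace ℝ (Fin N) =>
      U y ^ 2 * ‖x - y‖ ^ (-a) := by fun_prop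
  have hrepr : (∫ y in ball x R, U y ^ 2 / ‖x - y‖ ^ a) =
      (∫⁻ y in ball x R, ENNReal.ofReal (U y ^ 2 * ‖x - y‖ ^ (-a))).toReal := by
    simp_rw [hintg]
    exact integral_eq_lintegral_of_nonneg_ae
      (Filter.Eventually.of_forall fun y => by positivity) hmeas.aestronglyMeasurable
  -- bound the lintegral
  have hlint : (∫⁻ y in ball x R, ENNReal.ofReal (U y ^ 2 * ‖x - y‖ ^ (-a))) ≤
      ENNReal.ofReal (m ^ 2 * (c * R ^ ((N : ℝ) - a))) := by
    calc (∫⁻ y in ball x R, ENNReal.ofReal (U y ^ 2 * ‖x - y‖ ^ (-a)))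
        ≤ ∫⁻ y in ball x R, ENNReal.ofReal (m ^ 2) * ENNReal.ofReal (‖x - y‖ ^ (-a)) := by
          apply setLIntegral_mono' measurableSet_ball
          intro y hy
          rw [← ENNReal.ofReal_mul (by positivity)]
          apply ENNReal.ofReal_le_ofReal
          have : U y ^ 2 ≤ m ^ 2 := pow_le_pow_left₀ (hU0 y) (hUm y hy) 2
          have hk : (0:ℝ) ≤ ‖x - y‖ ^ (-a) := Real.rpow_nonneg (norm_nonneg _) _
          nlinarith
    _ = ENNReal.ofReal (m ^ 2) * ∫⁻ y in ball x R, ENNReal.ofReal (‖x - y‖ ^ (-a)) :=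
          lintegral_const_mul' _ _ ENNReal.ofReal_ne_top
    _ ≤ ENNReal.ofReal (m ^ 2) * ENNReal.ofReal (c * R ^ ((N : ℝ) - a)) := by
          gcongr
          exact hker x R hR
    _ = ENNReal.ofReal (m ^ 2 * (c * R ^ ((N : ℝ) - a))) :=
          (ENNReal.ofReal_mul (by positivity)).symm
  -- the real arithmetic
  have hNa : (N : ℝ) - a = 2 * s := by simp [hadef]
  have hpow2 : (R ^ e) ^ (2:ℕ) = R ^ (2 * e) := by
    rw [← Real.rpow_natCast (R ^ e) 2, ← Real.rpow_mul hR.le]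
    norm_num [mul_comm]
  have hm2 : m ^ 2 = β ^ 2 * R ^ (-(2 * e)) := by
    rw [hmdef, div_pow, hpow2, Real.rpow_neg hR.le, div_eq_mul_inv]
  have hval : m ^ 2 * (c * R ^ ((N : ℝ) - a)) = β ^ 2 * c * R ^ (-p) := by
    rw [hNa, hm2]
    have : R ^ (-(2 * e)) * R ^ (2 * s) = R ^ (-p) := by
      rw [← Real.rpow_add hR]
      congr 1
      rw [hedef, hpdef]; ring
    calc β ^ 2 * R ^ (-(2 * e)) * (c * R ^ (2 * s))
        = β ^ 2 * c * (R ^ (-(2 * e)) * R ^ (2 * s)) := by ring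
    _ = β ^ 2 * c * R ^ (-p) := by rw [this]
  have hRp : R ^ (-p) = 2 ^ p * (‖x‖ ^ p)⁻¹ := by
    rw [hRdef, Real.div_rpow (norm_nonneg x) (by norm_num : (0:ℝ) ≤ 2),
      Real.rpow_neg (norm_nonneg x), Real.rpow_neg (by norm_num : (0:ℝ) ≤ 2),
      div_eq_mul_inv, inv_inv, mul_comm]
  have hxp1 : 1 ≤ ‖x‖ ^ p := Real.one_le_rpow (by linarith) hp0.le
  have hfinal : β ^ 2 * c * R ^ (-p) ≤ 2 * β ^ 2 * c * 2 ^ p / (1 + ‖x‖ ^ p) := by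
    rw [hRp]
    have h2x : 1 + ‖x‖ ^ p ≤ 2 * ‖x‖ ^ p := by linarith
    have hxpp : (0:ℝ) < ‖x‖ ^ p := by linarith
    calc β ^ 2 * c * (2 ^ p * (‖x‖ ^ p)⁻¹)
        = 2 * β ^ 2 * c * 2 ^ p / (2 * ‖x‖ ^ p) := by
          field_simp
    _ ≤ 2 * β ^ 2 * c * 2 ^ p / (1 + ‖x‖ ^ p) :=
          div_le_div_of_nonneg_left (by positivity) (by positivity) h2x
  rw [hrepr]
  apply ENNReal.toReal_le_of_le_ofReal (by positivity)
  refine hlint.trans (ENNReal.ofReal_le_ofReal ?_)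
  rw [hval]
  exact hfinal
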